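/- For l > 0 and real b, the trace tr_{-n-1/2}(l, (n+1/2)l + b√-1) := (2/tanh²(l/2))·(cosh(l/2) + cos(b)) - 2cosh(l/2) satisfies: tr > -2 always, and tr < 2 if and only if cos(b) < tanh²(l/2) - 1/cosh(l/2); equivalently, if arccos(tanh²(l/2) - 1/cosh(l/2)) < b < π then -2 < tr < 2. -/

import Mathlib

theorem half_integer_slope_trace (l b : ℝ) (hl : 0 < l)
    (tr : ℝ)
    (htr : tr = (2 / Real.tanh (l / 2) ^ 2) * (Real.cosh (l / 2) + Real.cos b)
        - 2 * Real.cosh (l / 2)) :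
    -2 < tr ∧
    (tr < 2 ↔ Real.cos b < Real.tanh (l / 2) ^ 2 - 1 / Real.cosh (l / 2)) ∧
    ((Real.arccos (Real.tanh (l / 2) ^ 2 - 1 / Real.cosh (l / 2)) < b ∧ b < Real.pi) →
      -2 < tr ∧ tr < 2) := by
  set x := l / 2 with hxdef
  have hx : 0 < x := by positivity
  have hc : 1 < Real.cosh x := Real.one_lt_cosh.2 (ne_of_gt hx)
  have hc0 : 0 < Real.cosh x := by linarith
  set c := Real.cosh x with hcdef
  set T := Real.tanh x ^ 2 with hTdef
  have hTc2 : T * c ^ 2 = c ^ 2 - 1 := by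
    rw [hTdef, Real.tanh_eq_sinh_div_cosh, div_pow]
    rw [Real.sinh_sq]
    field_simp
    rw [← hcdef]; ring
  have hT0 : 0 < T := by nlinarith [hTc2]
  have hT1 : T < 1 := by nlinarith [hTc2]
  have hTc : T * c = c - 1 / c := by
    have hcne : c ≠ 0 := ne_of_gt hc0
    field_simp
    nlinarith [hTc2]
  have key : tr * T = 2 * (c + Real.cos b) - 2 * c * T := by
    rw [htr]; field_simp
  have hcos1 : -1 ≤ Real.cos b := Real.neg_one_le_cos b
  have part1 : -2 < tr := by
    have h : -2 * T < tr * T := by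
      nlinarith [mul_pos (sub_pos.2 hT1) (sub_pos.2 hc)]
    exact lt_of_mul_lt_mul_right h (le_of_lt hT0)
  have part2 : tr < 2 ↔ Real.cos b < T - 1 / c := by
    constructor
    · intro h
      have h2 : tr * T < 2 * T := by
        exact mul_lt_mul_of_pos_right h hT0
      nlinarith [hTc]
    · intro h
      have h2 : tr * T < 2 * T := by nlinarith [hTc]
      exact lt_of_mul_lt_mul_right h2 (le_of_lt hT0)
  refine ⟨part1, part2, ?_⟩
  rintro ⟨hb1, hb2⟩
  refine ⟨part1, part2.2 ?_⟩
  have hX1 : -1 ≤ T - 1 / c := by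
    have hT : T = 1 - 1 / c ^ 2 := by
      have hcne : c ≠ 0 := ne_of_gt hc0
      field_simp
      nlinarith [hTc2]
    rw [hT]
    have h1 : 1 / c < 1 := by rw [div_lt_one hc0]; linarith
    have h2 : 1 / c ^ 2 < 1 := by
      rw [div_lt_one (by positivity)]; nlinarith
    have h3 : 0 < 1 / c := by positivity
    have h4 : 0 < 1 / c ^ 2 := by positivity
    nlinarith
  have hX2 : T - 1 / c ≤ 1 := by
    have h3 : 0 < 1 / c := by positivity
    linarith
  have hb0 : 0 ≤ b := le_trans (Real.arccos_nonneg _) (le_of_lt hb1)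
  have := Real.strictAntiOn_cos (a := Real.arccos (T - 1 / c)) (b := b)
    ⟨Real.arccos_nonneg _, Real.arccos_le_pi _⟩ ⟨hb0, le_of_lt hb2⟩ hb1
  rwa [Real.cos_arccos hX1 hX2] at this
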